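/- There exists a constant c = √(D·r_0/√2) > 0 and a threshold T_0 such that for every even integer T ≥ T_0 the following holds: there exist a compact convex square X ⊂ ℝ² of side length D/√2 whose closest point to the origin has norm r_0, and nested compact convex sets X ⊇ S_1 ⊇ S_2 ⊇ ⋯ ⊇ S_T, such that, writing x_0^⋆ for the minimizer of f(x) = ‖x‖² over X and x_t^⋆ for the unique minimizer of f over S_t, the total movement of the greedy algorithm satisfies ∑_{t=1}^T ‖x_t^⋆ − x_{t−1}^⋆‖ ≥ c·√T. -/

import Mathlib

open scoped InnerProductSpace

namespace GreedyCones

noncomputable def emk (a b : ℝ) : EuclideanSpace ℝ (Fin 2) :=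
  (WithLp.equiv 2 (Fin 2 → ℝ)).symm ![a, b]

@[simp] lemma emk_zero (a b : ℝ) : emk a b 0 = a := rfl
@[simp] lemma emk_one (a b : ℝ) : emk a b 1 = b := rfl

lemma norm_two (u : EuclideanSpace ℝ (Fin 2)) :
    ‖u‖ = Real.sqrt ((u 0) ^ 2 + (u 1) ^ 2) := by
  rw [EuclideanSpace.norm_eq, Fin.sum_univ_two]
  simp [Real.norm_eq_abs, sq_abs]

lemma normsq_two (u : EuclideanSpace ℝ (Fin 2)) :
    ‖u‖ ^ 2 = (u 0) ^ 2 + (u 1) ^ 2 := by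
  rw [norm_two, Real.sq_sqrt (by positivity)]

lemma inner_two (u v : EuclideanSpace ℝ (Fin 2)) :
    ⟪u, v⟫_ℝ = u 0 * v 0 + u 1 * v 1 := by
  rw [PiLp.inner_apply, Fin.sum_univ_two]
  simp [RCLike.inner_apply, starRingEnd_apply]
  ring

lemma abs_fst_le_norm (u : EuclideanSpace ℝ (Fin 2)) : |u 0| ≤ ‖u‖ := by
  rw [norm_two, ← Real.sqrt_sq_eq_abs]
  exact Real.sqrt_le_sqrt (by nlinarith [sq_nonneg (u 1)])

lemma abs_snd_le_norm (u : EuclideanSpace ℝ (Fin 2)) : |u 1| ≤ ‖u‖ := by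
  rw [norm_two, ← Real.sqrt_sq_eq_abs]
  exact Real.sqrt_le_sqrt (by nlinarith [sq_nonneg (u 0)])

lemma norm_le_abs_add (u : EuclideanSpace ℝ (Fin 2)) : ‖u‖ ≤ |u 0| + |u 1| := by
  rw [norm_two]
  have h : (u 0) ^ 2 + (u 1) ^ 2 ≤ (|u 0| + |u 1|) ^ 2 := by
    have := abs_nonneg (u 0); have := abs_nonneg (u 1)
    nlinarith [sq_abs (u 0), sq_abs (u 1)]
  calc Real.sqrt ((u 0) ^ 2 + (u 1) ^ 2) ≤ Real.sqrt ((|u 0| + |u 1|) ^ 2) :=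
        Real.sqrt_le_sqrt h
    _ = |u 0| + |u 1| := Real.sqrt_sq (by positivity)

lemma strict_min {p y : EuclideanSpace ℝ (Fin 2)}
    (h : ‖p‖ ^ 2 ≤ ⟪p, y⟫_ℝ) (hne : y ≠ p) : ‖p‖ ^ 2 < ‖y‖ ^ 2 := by
  have h1 : ‖y - p‖ ^ 2 = ‖y‖ ^ 2 - 2 * ⟪y, p⟫_ℝ + ‖p‖ ^ 2 := norm_sub_sq_real y p
  have h2 : 0 < ‖y - p‖ ^ 2 := by
    have hne' : y - p ≠ 0 := sub_ne_zero.mpr hne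
    have := norm_pos_iff.mpr hne'
    positivity
  have h3 : ⟪y, p⟫_ℝ = ⟪p, y⟫_ℝ := real_inner_comm p y
  nlinarith

end GreedyCones


namespace GreedyCones

set_option maxHeartbeats 2000000 in
lemma construction (s r₀ c : ℝ) (hs0 : 0 < s) (hr : 0 < r₀)
    (hc0 : 0 < c) (hc2 : c ^ 2 = s * r₀) (T : ℕ) (hT2 : 2 ≤ T) (hTeven : Even T)
    (hTbig : (c * (r₀ + s) / (r₀ * s)) ^ 2 ≤ (T : ℝ)) :
    ∃ (X : Set (EuclideanSpace ℝ (Fin 2)))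
      (S : ℕ → Set (EuclideanSpace ℝ (Fin 2)))
      (xs : ℕ → EuclideanSpace ℝ (Fin 2)),
      IsCompact X ∧ Convex ℝ X ∧
      (∃ z : EuclideanSpace ℝ (Fin 2),
        X = {x | ∀ i, z i ≤ x i ∧ x i ≤ z i + s}) ∧
      (∃ p ∈ X, ‖p‖ = r₀ ∧ ∀ q ∈ X, ‖p‖ ≤ ‖q‖) ∧
      S 1 ⊆ X ∧
      (∀ t, 1 ≤ t → t < T → S (t + 1) ⊆ S t) ∧
      (∀ t ∈ Finset.Icc 1 T, IsCompact (S t) ∧ Convex ℝ (S t)) ∧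
      (xs 0 ∈ X ∧ ∀ y ∈ X, ‖xs 0‖ ^ 2 ≤ ‖y‖ ^ 2) ∧
      (∀ t ∈ Finset.Icc 1 T, xs t ∈ S t ∧
        ∀ y ∈ S t, y ≠ xs t → ‖xs t‖ ^ 2 < ‖y‖ ^ 2) ∧
      c * Real.sqrt T ≤ ∑ t ∈ Finset.Icc 1 T, ‖xs t - xs (t - 1)‖ := by
  classical
  have h2pos : (0:ℝ) < Real.sqrt 2 := by positivity
  have hsq2 : (Real.sqrt 2) ^ 2 = 2 := Real.sq_sqrt (by norm_num)
  have hsqrt2le : Real.sqrt 2 ≤ 2 := by nlinarith [h2pos.le]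
  have hsqrt2ge : (4:ℝ)/3 ≤ Real.sqrt 2 := by nlinarith [h2pos.le]
  obtain ⟨R, hR_def⟩ : ∃ R : ℝ, R = if s ≤ r₀ then r₀ else (r₀ + s) / Real.sqrt 2 := ⟨_, rfl⟩
  have hrR : r₀ ≤ R := by
    rw [hR_def]; split_ifs with h
    · exact le_refl _
    · rw [le_div_iff₀ h2pos]; nlinarith
  have hR0 : 0 < R := lt_of_lt_of_le hr hrR
  have hmaster : R ≤ (r₀ + s) * (1 - s * r₀ / (2 * R ^ 2)) := by
    rw [hR_def]; split_ifs with h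
    · have key : (r₀ + s) * (1 - s * r₀ / (2 * r₀ ^ 2)) - r₀ = s * (r₀ - s) / (2 * r₀) := by
        field_simp; ring
      nlinarith [div_nonneg (mul_nonneg hs0.le (sub_nonneg.mpr h))
        (by positivity : (0:ℝ) ≤ 2 * r₀)]
    · have e1 : ((r₀ + s) / Real.sqrt 2) ^ 2 = (r₀ + s) ^ 2 / 2 := by
        rw [div_pow, hsq2]
      rw [e1]
      have hrs : (0:ℝ) < r₀ + s := by linarith
      have h4 : s * r₀ / (2 * ((r₀ + s) ^ 2 / 2)) ≤ 1/4 := by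
        rw [div_le_iff₀ (by positivity)]; nlinarith [sq_nonneg (r₀ - s)]
      have h5 : (r₀ + s) / Real.sqrt 2 ≤ (r₀ + s) * (3/4) := by
        rw [div_le_iff₀ h2pos]; nlinarith
      nlinarith
  have hq1 : s * r₀ / R ^ 2 ≤ 1 := by
    rw [hR_def]; split_ifs with h
    · rw [div_le_one (by positivity)]; nlinarith
    · have e1 : ((r₀ + s) / Real.sqrt 2) ^ 2 = (r₀ + s) ^ 2 / 2 := by rw [div_pow, hsq2]
      rw [e1, div_le_one (by positivity)]; nlinarith [sq_nonneg (r₀ - s)]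
  have hTpos : (0:ℝ) < T := by exact_mod_cast Nat.lt_of_lt_of_le (by norm_num) hT2
  have hsqT : (0:ℝ) < Real.sqrt T := Real.sqrt_pos.mpr hTpos
  have hsqTsq : Real.sqrt T ^ 2 = (T:ℝ) := Real.sq_sqrt hTpos.le
  obtain ⟨ε, hε_def⟩ : ∃ e : ℝ, e = c / (R * Real.sqrt T) := ⟨_, rfl⟩
  have hε0 : 0 < ε := by rw [hε_def]; exact div_pos hc0 (mul_pos hR0 hsqT)
  have hε2 : ε ^ 2 = s * r₀ / (R ^ 2 * T) := by
    rw [hε_def, div_pow, mul_pow, hsqTsq, hc2]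
  have hε2le : ε ^ 2 ≤ 1 / T := by
    rw [hε2]
    have e : s * r₀ / (R ^ 2 * (T:ℝ)) = (s * r₀ / R ^ 2) / (T:ℝ) := by
      rw [div_div]
    rw [e]
    gcongr
  have hε2lt : ε ^ 2 < 1 := lt_of_le_of_lt hε2le (by
    rw [div_lt_one hTpos]
    exact_mod_cast Nat.lt_of_lt_of_le (by norm_num) hT2)
  obtain ⟨c', hc'_def⟩ : ∃ x : ℝ, x = Real.sqrt (1 - ε ^ 2) := ⟨_, rfl⟩
  have hc'0 : 0 < c' := by rw [hc'_def]; exact Real.sqrt_pos.mpr (by linarith)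
  have hc'sq : c' ^ 2 = 1 - ε ^ 2 := by rw [hc'_def]; exact Real.sq_sqrt (by linarith)
  have hc'le1 : c' ≤ 1 := by rw [hc'_def]; exact Real.sqrt_le_one.mpr (by linarith [sq_nonneg ε])
  obtain ⟨ρ, hρ_def⟩ : ∃ f : ℕ → ℝ, f = fun t => R / c' ^ t := ⟨_, rfl⟩
  have hρt : ∀ t, ρ t = R / c' ^ t := fun t => by rw [hρ_def]
  have hρpos : ∀ t, 0 < ρ t := fun t => by rw [hρt t]; exact div_pos hR0 (pow_pos hc'0 t)
  have hρR : ∀ t, R ≤ ρ t := by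
    intro t
    rw [hρt t, le_div_iff₀ (pow_pos hc'0 t)]
    exact mul_le_of_le_one_right hR0.le (pow_le_one₀ hc'0.le hc'le1)
  have hρmono : ∀ k t, k ≤ t → ρ k ≤ ρ t := by
    intro k t hkt
    rw [hρt k, hρt t]
    exact div_le_div_of_nonneg_left hR0.le (pow_pos hc'0 t)
      (pow_le_pow_of_le_one hc'0.le hc'le1 hkt)
  have hρc' : ∀ t, 1 ≤ t → ρ t * c' = ρ (t - 1) := by
    intro t ht
    obtain ⟨u, rfl⟩ := Nat.exists_eq_add_of_le ht
    rw [hρt, hρt]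
    simp only [Nat.add_sub_cancel_left, pow_add, pow_one]
    field_simp
  -- key bound: ρ T ≤ r₀ + s
  obtain ⟨m, hm⟩ := hTeven
  have hTm : (T : ℝ) = 2 * m := by rw [hm]; push_cast; ring
  have hm0 : (0:ℝ) < m := by
    have h2T : (2:ℝ) ≤ (T:ℝ) := by exact_mod_cast hT2
    rw [hTm] at h2T; linarith
  have hbern : 1 - (m:ℝ) * ε ^ 2 ≤ (1 - ε ^ 2) ^ m := by
    have h := one_add_mul_le_pow (a := -ε ^ 2) (by linarith [hε2lt.le]) m
    calc 1 - (m:ℝ) * ε ^ 2 = 1 + (m:ℝ) * (-ε ^ 2) := by ring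
      _ ≤ (1 + -ε ^ 2) ^ m := h
      _ = (1 - ε ^ 2) ^ m := by ring_nf
  have hmε : (m : ℝ) * ε ^ 2 = s * r₀ / (2 * R ^ 2) := by
    have hB : (0:ℝ) < R ^ 2 * (2 * m) := mul_pos (pow_pos hR0 2) (by linarith)
    have hC : (0:ℝ) < 2 * R ^ 2 := mul_pos (by norm_num) (pow_pos hR0 2)
    rw [hε2, hTm, mul_div_assoc', div_eq_div_iff hB.ne' hC.ne']
    ring
  have hcT : c' ^ T = (1 - ε ^ 2) ^ m := by
    rw [hm, ← two_mul, pow_mul, hc'sq]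
  have hρT : ρ T ≤ r₀ + s := by
    rw [hρt, div_le_iff₀ (pow_pos hc'0 T)]
    calc R ≤ (r₀ + s) * (1 - s * r₀ / (2 * R ^ 2)) := hmaster
      _ = (r₀ + s) * (1 - (m:ℝ) * ε ^ 2) := by rw [hmε]
      _ ≤ (r₀ + s) * ((1 - ε ^ 2) ^ m) := by
          apply mul_le_mul_of_nonneg_left hbern (by linarith)
      _ = (r₀ + s) * c' ^ T := by rw [hcT]
  have hρtop : ∀ t, t ≤ T → ρ t ≤ r₀ + s := fun t ht => le_trans (hρmono t T ht) hρT
  -- ε is small enough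
  have hεs : (r₀ + s) * ε ≤ s := by
    have h2 : c * (r₀ + s) / (r₀ * s) ≤ Real.sqrt T := by
      rw [← Real.sqrt_sq (by positivity : (0:ℝ) ≤ c * (r₀ + s) / (r₀ * s))]
      exact Real.sqrt_le_sqrt hTbig
    have h3 : s * r₀ * (c * (r₀ + s) / (r₀ * s)) = c * (r₀ + s) := by
      field_simp
    have h4 : s * r₀ * (c * (r₀ + s) / (r₀ * s)) ≤ s * (R * Real.sqrt T) := by
      calc s * r₀ * (c * (r₀ + s) / (r₀ * s)) ≤ s * r₀ * Real.sqrt T := by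
            apply mul_le_mul_of_nonneg_left h2 (by positivity)
        _ ≤ s * (R * Real.sqrt T) := by
            rw [← mul_assoc]
            apply mul_le_mul_of_nonneg_right _ hsqT.le
            exact mul_le_mul_of_nonneg_left hrR hs0.le
    rw [hε_def, mul_div_assoc', div_le_iff₀ (mul_pos hR0 hsqT)]
    calc (r₀ + s) * c = c * (r₀ + s) := by ring
      _ = s * r₀ * (c * (r₀ + s) / (r₀ * s)) := h3.symm
      _ ≤ s * (R * Real.sqrt T) := h4

  -- ## the construction
  obtain ⟨z, hz_def⟩ : ∃ z : EuclideanSpace ℝ (Fin 2), z = emk 0 r₀ := ⟨_, rfl⟩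
  have hz0 : z 0 = 0 := by rw [hz_def, emk_zero]
  have hz1 : z 1 = r₀ := by rw [hz_def, emk_one]
  obtain ⟨X, hX_def⟩ : ∃ X : Set (EuclideanSpace ℝ (Fin 2)),
      X = {x : EuclideanSpace ℝ (Fin 2) | ∀ i, z i ≤ x i ∧ x i ≤ z i + s} := ⟨_, rfl⟩
  obtain ⟨p, hp_def⟩ : ∃ p : ℕ → EuclideanSpace ℝ (Fin 2),
      p = fun t => if Even t then emk 0 (ρ t) else emk (ρ t * ε) (ρ t * c') := ⟨_, rfl⟩
  have hp_even : ∀ t, Even t → p t = emk 0 (ρ t) := fun t h => by rw [hp_def]; simp [h]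
  have hp_odd : ∀ t, ¬ Even t → p t = emk (ρ t * ε) (ρ t * c') := fun t h => by
    rw [hp_def]; simp [h]
  obtain ⟨H, hH_def⟩ : ∃ H : ℕ → Set (EuclideanSpace ℝ (Fin 2)),
      H = fun k => {y : EuclideanSpace ℝ (Fin 2) | ρ k ^ 2 ≤ ⟪p k, y⟫_ℝ} := ⟨_, rfl⟩
  obtain ⟨S, hS_def⟩ : ∃ S : ℕ → Set (EuclideanSpace ℝ (Fin 2)),
      S = fun t => X ∩ ⋂ k ∈ Finset.Icc 1 t, H k := ⟨_, rfl⟩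
  obtain ⟨xs, hxs_def⟩ : ∃ xs : ℕ → EuclideanSpace ℝ (Fin 2),
      xs = fun t => if t = 0 then z else p t := ⟨_, rfl⟩
  have hxs0 : xs 0 = z := by rw [hxs_def]; simp
  have hxst : ∀ t, 1 ≤ t → xs t = p t := fun t ht => by
    rw [hxs_def]; simp [Nat.one_le_iff_ne_zero.mp ht]
  have hXmem : ∀ x : EuclideanSpace ℝ (Fin 2),
      x ∈ X ↔ ((0 ≤ x 0 ∧ x 0 ≤ 0 + s) ∧ (r₀ ≤ x 1 ∧ x 1 ≤ r₀ + s)) := by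
    intro x
    rw [hX_def]
    simp only [Set.mem_setOf_eq, Fin.forall_fin_two, hz0, hz1]
  -- X is compact
  have hXclosed : IsClosed X := by
    rw [hX_def]
    have e : {x : EuclideanSpace ℝ (Fin 2) | ∀ i, z i ≤ x i ∧ x i ≤ z i + s}
        = ⋂ i : Fin 2, ((fun x : EuclideanSpace ℝ (Fin 2) => x i) ⁻¹'
            Set.Icc (z i) (z i + s)) := by
      ext x
      simp [Set.mem_iInter, Set.mem_Icc]
    rw [e]
    refine isClosed_iInter fun i => IsClosed.preimage ?_ isClosed_Icc
    exact (EuclideanSpace.proj (𝕜 := ℝ) i).continuous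
  have hXbdd : Bornology.IsBounded X := by
    apply (Metric.isBounded_closedBall
      (x := (0 : EuclideanSpace ℝ (Fin 2))) (r := s + (r₀ + s))).subset
    intro x hx
    rw [Metric.mem_closedBall, dist_zero_right]
    obtain ⟨⟨h1, h2⟩, h3, h4⟩ := (hXmem x).mp hx
    have hn := norm_le_abs_add x
    have e0 : |x 0| ≤ s := abs_le.mpr ⟨by linarith only [h1, hr, hs0], by linarith only [h2]⟩
    have e1 : |x 1| ≤ r₀ + s := abs_le.mpr ⟨by linarith only [h3, hr, hs0], by linarith only [h4]⟩
    linarith only [hn, e0, e1]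
  have hXcompact : IsCompact X := Metric.isCompact_of_isClosed_isBounded hXclosed hXbdd
  have hXconvex : Convex ℝ X := by
    rw [hX_def]
    intro x hx y hy a b ha hb hab i
    have hxi := hx i
    have hyi := hy i
    have e : (a • x + b • y) i = a * x i + b * y i := rfl
    rw [e]
    have e0 : a * z i + b * z i = z i := by rw [← add_mul, hab, one_mul]
    have e0' : a * (z i + s) + b * (z i + s) = z i + s := by rw [← add_mul, hab, one_mul]
    constructor
    · have e1 := mul_le_mul_of_nonneg_left hxi.1 ha
      have e2 := mul_le_mul_of_nonneg_left hyi.1 hb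
      linarith only [e0, e1, e2]
    · have e1 := mul_le_mul_of_nonneg_left hxi.2 ha
      have e2 := mul_le_mul_of_nonneg_left hyi.2 hb
      linarith only [e0', e1, e2]
  have hznorm : ‖z‖ = r₀ := by
    rw [hz_def, norm_two]
    simp only [emk_zero, emk_one]
    rw [show (0:ℝ) ^ 2 + r₀ ^ 2 = r₀ ^ 2 by ring, Real.sqrt_sq hr.le]
  have hzX : z ∈ X := (hXmem z).mpr
    ⟨⟨hz0.ge, by rw [hz0]; linarith only [hs0]⟩,
     ⟨hz1.ge, by rw [hz1]; linarith only [hs0]⟩⟩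
  have hmin : ∀ y ∈ X, r₀ ^ 2 ≤ ‖y‖ ^ 2 := by
    intro y hy
    obtain ⟨⟨h1, h2⟩, h3, h4⟩ := (hXmem y).mp hy
    rw [normsq_two]
    have e1 : r₀ ^ 2 ≤ (y 1) ^ 2 := pow_le_pow_left₀ hr.le h3 2
    linarith only [e1, sq_nonneg (y 0)]
  have hnormp : ∀ t, ‖p t‖ ^ 2 = ρ t ^ 2 := by
    intro t
    by_cases h : Even t
    · rw [hp_even t h, normsq_two]
      simp only [emk_zero, emk_one]
      ring
    · rw [hp_odd t h, normsq_two]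
      simp only [emk_zero, emk_one]
      linear_combination (ρ t) ^ 2 * hc'sq
  have hpX : ∀ t, 1 ≤ t → t ≤ T → p t ∈ X := by
    intro t h1 h2
    apply (hXmem _).mpr
    by_cases h : Even t
    · rw [hp_even t h]
      simp only [emk_zero, emk_one]
      exact ⟨⟨le_refl 0, by linarith only [hs0]⟩,
        ⟨le_trans hrR (hρR t), hρtop t h2⟩⟩
    · rw [hp_odd t h]
      simp only [emk_zero, emk_one]
      have hρc := hρc' t h1
      refine ⟨⟨(mul_pos (hρpos t) hε0).le, ?_⟩, ⟨?_, ?_⟩⟩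
      · have e1 : ρ t * ε ≤ (r₀ + s) * ε :=
          mul_le_mul_of_nonneg_right (hρtop t h2) hε0.le
        linarith only [e1, hεs]
      · rw [hρc]; exact le_trans hrR (hρR _)
      · calc ρ t * c' ≤ ρ t * 1 := mul_le_mul_of_nonneg_left hc'le1 (hρpos t).le
          _ = ρ t := mul_one _
          _ ≤ r₀ + s := hρtop t h2
  have hinner : ∀ k t, k ≤ t → ρ k ^ 2 ≤ ⟪p k, p t⟫_ℝ := by
    intro k t hkt
    by_cases hk : Even k <;> by_cases ht : Even t
    · rw [hp_even k hk, hp_even t ht, inner_two]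
      simp only [emk_zero, emk_one]
      linarith only [mul_le_mul_of_nonneg_left (hρmono k t hkt) (hρpos k).le,
        sq_nonneg (ρ k), sq (ρ k) ▸ le_refl (ρ k ^ 2),
        (sq (ρ k)).symm ▸ mul_le_mul_of_nonneg_left (hρmono k t hkt) (hρpos k).le]
    · have hne : k ≠ t := fun he => ht (he ▸ hk)
      have hklt : k ≤ t - 1 := by omega
      rw [hp_even k hk, hp_odd t ht, inner_two]
      simp only [emk_zero, emk_one]
      have e : ρ t * c' = ρ (t - 1) := hρc' t (by omega)
      have hmono : ρ k ≤ ρ (t - 1) := hρmono k (t - 1) hklt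
      rw [e]
      have e2 := mul_le_mul_of_nonneg_left hmono (hρpos k).le
      have e3 : ρ k ^ 2 = ρ k * ρ k := sq (ρ k)
      linarith only [e2, e3]
    · have hne : k ≠ t := fun he => hk (he ▸ ht)
      have hklt : k ≤ t - 1 := by omega
      rw [hp_odd k hk, hp_even t ht, inner_two]
      simp only [emk_zero, emk_one]
      have e : ρ t * c' = ρ (t - 1) := hρc' t (by omega)
      have hmono : ρ k ≤ ρ (t - 1) := hρmono k (t - 1) hklt
      have e2 : ρ k * (ρ t * c') = ρ k * ρ (t - 1) := by rw [e]
      have e3 := mul_le_mul_of_nonneg_left hmono (hρpos k).le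
      have e4 : ρ k ^ 2 = ρ k * ρ k := sq (ρ k)
      linarith only [e2, e3, e4]
    · rw [hp_odd k hk, hp_odd t ht, inner_two]
      simp only [emk_zero, emk_one]
      have e : ρ k * ε * (ρ t * ε) + ρ k * c' * (ρ t * c') = ρ k * ρ t := by
        linear_combination (ρ k * ρ t) * hc'sq
      rw [e]
      have e3 := mul_le_mul_of_nonneg_left (hρmono k t hkt) (hρpos k).le
      have e4 : ρ k ^ 2 = ρ k * ρ k := sq (ρ k)
      linarith only [e3, e4]
  -- assemble
  refine ⟨X, S, xs, hXcompact, hXconvex, ⟨z, hX_def⟩,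
    ⟨z, hzX, hznorm, ?_⟩, ?_, ?_, ?_, ⟨?_, ?_⟩, ?_, ?_⟩
  · intro q hq
    rw [hznorm]
    nlinarith only [hmin q hq, norm_nonneg q, hr]
  · rw [hS_def]
    exact Set.inter_subset_left
  · intro t _ _
    rw [hS_def]
    intro x hx
    refine ⟨hx.1, Set.mem_iInter₂.mpr fun k hk => Set.mem_iInter₂.mp hx.2 k ?_⟩
    simp only [Finset.mem_Icc] at hk ⊢
    omega
  · intro t _
    rw [hS_def]
    constructor
    · apply hXcompact.inter_right
      refine isClosed_iInter fun k => isClosed_iInter fun _ => ?_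
      rw [hH_def]
      exact isClosed_le continuous_const (Continuous.inner continuous_const continuous_id)
    · apply hXconvex.inter
      refine convex_iInter fun k => convex_iInter fun _ => ?_
      rw [hH_def]
      exact convex_halfSpace_ge
        ⟨fun a b => inner_add_right _ _ _, fun r x => real_inner_smul_right _ _ _⟩ _
  · rw [hxs0]; exact hzX
  · intro y hy
    rw [hxs0]
    have e : ‖z‖ ^ 2 = r₀ ^ 2 := by rw [hznorm]
    rw [e]
    exact hmin y hy
  · intro t ht
    obtain ⟨ht1, ht2⟩ := Finset.mem_Icc.mp ht
    have hxs_t : xs t = p t := hxst t ht1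
    constructor
    · rw [hxs_t, hS_def]
      refine ⟨hpX t ht1 ht2, Set.mem_iInter₂.mpr fun k hk => ?_⟩
      rw [hH_def]
      exact hinner k t (Finset.mem_Icc.mp hk).2
    · intro y hy hne
      rw [hxs_t] at hne ⊢
      have hyH : y ∈ H t := by
        rw [hS_def] at hy
        exact Set.mem_iInter₂.mp hy.2 t (Finset.mem_Icc.mpr ⟨ht1, le_refl t⟩)
      rw [hH_def] at hyH
      have hle : ‖p t‖ ^ 2 ≤ ⟪p t, y⟫_ℝ := by
        rw [hnormp t]
        exact hyH
      exact strict_min hle hne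
  · -- movement lower bound
    have hterm : ∀ t ∈ Finset.Icc 1 T, R * ε ≤ ‖xs t - xs (t - 1)‖ := by
      intro t ht
      obtain ⟨ht1, ht2⟩ := Finset.mem_Icc.mp ht
      have key : R * ε ≤ |(xs t - xs (t - 1)) 0| := by
        have esub : (xs t - xs (t - 1)) 0 = xs t 0 - xs (t - 1) 0 := rfl
        rw [esub]
        rcases Nat.even_or_odd t with he | ho
        · have het1 : ¬ Even (t - 1) := by
            rw [Nat.even_iff] at he ⊢
            omega
          have ht1ne : t - 1 ≠ 0 := by
            rw [Nat.even_iff] at he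
            omega
          have hxt : xs t 0 = 0 := by rw [hxst t ht1, hp_even t he, emk_zero]
          have hxt1 : xs (t - 1) 0 = ρ (t - 1) * ε := by
            rw [hxst (t - 1) (by omega), hp_odd (t - 1) het1, emk_zero]
          rw [hxt, hxt1, zero_sub, abs_neg,
            abs_of_nonneg (mul_nonneg (hρpos _).le hε0.le)]
          exact mul_le_mul_of_nonneg_right (hρR _) hε0.le
        · have hto : ¬ Even t := Nat.not_even_iff_odd.mpr ho
          have hxt : xs t 0 = ρ t * ε := by rw [hxst t ht1, hp_odd t hto, emk_zero]
          have hxt1 : xs (t - 1) 0 = 0 := by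
            by_cases h0 : t - 1 = 0
            · rw [h0, hxs0, hz0]
            · have hev : Even (t - 1) := by
                rw [Nat.odd_iff] at ho
                rw [Nat.even_iff]
                omega
              rw [hxst (t - 1) (by omega), hp_even (t - 1) hev, emk_zero]
          rw [hxt, hxt1, sub_zero, abs_of_nonneg (mul_nonneg (hρpos t).le hε0.le)]
          exact mul_le_mul_of_nonneg_right (hρR t) hε0.le
      exact le_trans key (abs_fst_le_norm _)
    have hcard : (Finset.Icc 1 T).card = T := by rw [Nat.card_Icc]; omega
    calc c * Real.sqrt T = (T : ℝ) * (R * ε) := by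
          rw [hε_def]
          have e1 : R * (c / (R * Real.sqrt T)) = c / Real.sqrt T := by
            rw [mul_div_assoc']
            rw [div_eq_div_iff (mul_pos hR0 hsqT).ne' hsqT.ne']
            ring
          rw [e1]
          rw [eq_comm, mul_div_assoc']
          rw [div_eq_iff hsqT.ne']
          linear_combination (-c) * hsqTsq
      _ = ∑ _t ∈ Finset.Icc 1 T, (R * ε) := by
          rw [Finset.sum_const, hcard, nsmul_eq_mul]
      _ ≤ ∑ t ∈ Finset.Icc 1 T, ‖xs t - xs (t - 1)‖ := Finset.sum_le_sum hterm


end GreedyCones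

open GreedyCones in
set_option maxHeartbeats 1000000 in
/-- Ω(√T) lower bound on the movement cost of the greedy algorithm for the strongly
convex loss `f x = ‖x‖²`: there is a constant `c = √(D·r₀/√2) > 0` and a threshold `T₀`
such that for every even `T ≥ T₀` there are a compact convex axis-aligned square
`X ⊂ ℝ²` of side `D/√2` whose closest point to the origin has norm `r₀`, and nested
compact convex sets `X ⊇ S 1 ⊇ ⋯ ⊇ S T`, with `xs 0` the minimizer of `f` over `X` and
`xs t` the unique minimizer of `f` over `S t`, for which the greedy movement cost is at
least `c·√T`. -/
theorem greedy_movement_lower_bound_strongly_convex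
    (D r₀ : ℝ) (hD : 0 < D) (hr : 0 < r₀) :
    ∃ c : ℝ, c = Real.sqrt (D * r₀ / Real.sqrt 2) ∧ 0 < c ∧
    ∃ T₀ : ℕ, ∀ T : ℕ, T₀ ≤ T → Even T →
      ∃ (X : Set (EuclideanSpace ℝ (Fin 2)))
        (S : ℕ → Set (EuclideanSpace ℝ (Fin 2)))
        (xs : ℕ → EuclideanSpace ℝ (Fin 2)),
        IsCompact X ∧ Convex ℝ X ∧
        (∃ z : EuclideanSpace ℝ (Fin 2),
          X = {x | ∀ i, z i ≤ x i ∧ x i ≤ z i + D / Real.sqrt 2}) ∧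
        (∃ p ∈ X, ‖p‖ = r₀ ∧ ∀ q ∈ X, ‖p‖ ≤ ‖q‖) ∧
        S 1 ⊆ X ∧
        (∀ t, 1 ≤ t → t < T → S (t + 1) ⊆ S t) ∧
        (∀ t ∈ Finset.Icc 1 T, IsCompact (S t) ∧ Convex ℝ (S t)) ∧
        (xs 0 ∈ X ∧ ∀ y ∈ X, ‖xs 0‖ ^ 2 ≤ ‖y‖ ^ 2) ∧
        (∀ t ∈ Finset.Icc 1 T, xs t ∈ S t ∧
          ∀ y ∈ S t, y ≠ xs t → ‖xs t‖ ^ 2 < ‖y‖ ^ 2) ∧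
        c * Real.sqrt T ≤ ∑ t ∈ Finset.Icc 1 T, ‖xs t - xs (t - 1)‖ := by
  have h2pos : (0:ℝ) < Real.sqrt 2 := by positivity
  set s : ℝ := D / Real.sqrt 2 with hs_def
  have hs0 : 0 < s := div_pos hD h2pos
  set c : ℝ := Real.sqrt (D * r₀ / Real.sqrt 2) with hc_def
  have hc2 : c ^ 2 = s * r₀ := by
    rw [hc_def, Real.sq_sqrt (by positivity), hs_def]; ring
  have hc0 : 0 < c := Real.sqrt_pos.mpr (by positivity)
  refine ⟨c, rfl, hc0, ⌈(c * (r₀ + s) / (r₀ * s)) ^ 2⌉₊ + 2, ?_⟩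
  intro T hTT hTeven
  have hT2 : 2 ≤ T := le_trans (by omega) hTT
  have hTbig : (c * (r₀ + s) / (r₀ * s)) ^ 2 ≤ (T : ℝ) := by
    calc (c * (r₀ + s) / (r₀ * s)) ^ 2 ≤ (⌈(c * (r₀ + s) / (r₀ * s)) ^ 2⌉₊ : ℝ) :=
          Nat.le_ceil _
      _ ≤ (T : ℝ) := by exact_mod_cast le_trans (by omega) hTT
  exact construction s r₀ c hs0 hr hc0 hc2 T hT2 hTeven hTbig
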